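/- arXiv:1712.07211 — 2 statements merged into one kernel-verified Lean document; each statement's English description precedes it below -/
import Mathlib

section
/- For positive integers n, d with 1 ≤ d < n/2 and x = d/n, the partial sum of binomial coefficients ∑_{i=0}^{d-2} C(n,i) is strictly less than (x²/((1-2x)(1-x)))·C(n,d). -/
open Finset

lemma mac_step (n d j : ℕ) (h : j + 1 ≤ d) :
    n.choose j * (n - d) ≤ d * n.choose (j + 1) := by
  have h1 : n.choose j * (n - d) ≤ n.choose j * (n - j) :=
    Nat.mul_le_mul_left _ (Nat.sub_le_sub_left (le_trans (Nat.le_succ j) h) n)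
  have h2 : n.choose (j + 1) * (j + 1) = n.choose j * (n - j) :=
    Nat.choose_succ_right_eq n j
  have h3 : n.choose (j + 1) * (j + 1) ≤ n.choose (j + 1) * d :=
    Nat.mul_le_mul_left _ h
  calc n.choose j * (n - d) ≤ n.choose j * (n - j) := h1
    _ = n.choose (j + 1) * (j + 1) := h2.symm
    _ ≤ n.choose (j + 1) * d := h3
    _ = d * n.choose (j + 1) := Nat.mul_comm _ _

lemma mac_iter (n d : ℕ) : ∀ k, k ≤ d →
    n.choose (d - k) * (n - d) ^ k ≤ d ^ k * n.choose d := by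
  intro k
  induction k with
  | zero => simp
  | succ k ih =>
    intro hk
    have hk' : k ≤ d := Nat.le_of_succ_le hk
    have he : d - (k + 1) + 1 = d - k := by omega
    calc n.choose (d - (k + 1)) * (n - d) ^ (k + 1)
        = (n.choose (d - (k + 1)) * (n - d)) * (n - d) ^ k := by ring
      _ ≤ (d * n.choose (d - (k + 1) + 1)) * (n - d) ^ k := by
          exact Nat.mul_le_mul_right _ (mac_step n d _ (by omega))
      _ = d * (n.choose (d - k) * (n - d) ^ k) := by rw [he]; ring
      _ ≤ d * (d ^ k * n.choose d) := Nat.mul_le_mul_left _ (ih hk')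
      _ = d ^ (k + 1) * n.choose d := by ring

/-- row-count bound for the Boolean Macaulay matrix. -/
theorem macaulay_row_bound (n d : ℕ) (hd : 1 ≤ d) (hdn : 2 * d < n)
    (x : ℝ) (hx : x = (d : ℝ) / n) :
    (∑ i ∈ Finset.range (d - 1), (n.choose i : ℝ)) <
      (x ^ 2 / ((1 - 2 * x) * (1 - x))) * (n.choose d : ℝ) := by
  have hdn' : d ≤ n := by omega
  have hD : (1 : ℝ) ≤ (d : ℝ) := by exact_mod_cast hd
  have hN : 2 * (d : ℝ) < (n : ℝ) := by exact_mod_cast hdn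
  have hND : (0 : ℝ) < (n : ℝ) - (d : ℝ) := by linarith
  have hN2D : (0 : ℝ) < (n : ℝ) - 2 * (d : ℝ) := by linarith
  have hNpos : (0 : ℝ) < (n : ℝ) := by linarith
  set r : ℝ := (d : ℝ) / ((n : ℝ) - (d : ℝ)) with hr
  have hr0 : 0 < r := div_pos (by linarith) hND
  have hr1 : r < 1 := (div_lt_one hND).mpr (by linarith)
  have hC : (0 : ℝ) < (n.choose d : ℝ) := by
    exact_mod_cast Nat.choose_pos hdn'
  -- per-term bound
  have hterm : ∀ i ∈ Finset.range (d - 1),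
      (n.choose i : ℝ) ≤ (n.choose d : ℝ) * r ^ (d - i) := by
    intro i hi
    rw [Finset.mem_range] at hi
    have hid : i ≤ d := by omega
    have key := mac_iter n d (d - i) (Nat.sub_le d i)
    rw [show d - (d - i) = i by omega] at key
    have keyR : (n.choose i : ℝ) * ((n : ℝ) - (d : ℝ)) ^ (d - i)
        ≤ (d : ℝ) ^ (d - i) * (n.choose d : ℝ) := by
      have := (Nat.cast_le (α := ℝ)).mpr key
      push_cast [Nat.cast_sub hdn'] at this
      convert this using 2 <;> push_cast [Nat.cast_sub hdn'] <;> ring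
    have hpow : (0 : ℝ) < ((n : ℝ) - (d : ℝ)) ^ (d - i) := pow_pos hND _
    rw [hr, div_pow, mul_div_assoc', mul_comm]
    rw [le_div_iff₀ hpow]
    calc (n.choose i : ℝ) * ((n:ℝ) - d) ^ (d - i)
        ≤ (d:ℝ) ^ (d-i) * (n.choose d : ℝ) := keyR
      _ = (d:ℝ) ^ (d-i) * (n.choose d : ℝ) := rfl
  have hsum : (∑ i ∈ Finset.range (d - 1), (n.choose i : ℝ))
      ≤ (n.choose d : ℝ) * r ^ 2 * ∑ j ∈ Finset.range (d - 1), r ^ j := by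
    calc (∑ i ∈ Finset.range (d - 1), (n.choose i : ℝ))
        ≤ ∑ i ∈ Finset.range (d - 1), (n.choose d : ℝ) * r ^ (d - i) :=
          Finset.sum_le_sum hterm
      _ = (n.choose d : ℝ) * r ^ 2 * ∑ j ∈ Finset.range (d - 1), r ^ j := by
          rw [Finset.mul_sum]
          rw [← Finset.sum_range_reflect (fun j => (n.choose d : ℝ) * r ^ 2 * r ^ j) (d-1)]
          apply Finset.sum_congr rfl
          intro i hi
          rw [Finset.mem_range] at hi
          rw [show d - i = 2 + (d - 1 - 1 - i) by omega, pow_add]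
          ring
  have hgeom : (∑ j ∈ Finset.range (d - 1), r ^ j) < 1 / (1 - r) := by
    have hrne : r ≠ 1 := ne_of_lt hr1
    rw [geom_sum_eq hrne]
    rw [show (r ^ (d-1) - 1) / (r - 1) = (1 - r ^ (d-1)) / (1 - r) by
      rw [← neg_sub (r ^ (d-1)) 1, ← neg_sub r 1, neg_div_neg_eq]]
    have hpow : (0:ℝ) < r ^ (d-1) := pow_pos hr0 _
    have h1r : (0:ℝ) < 1 - r := by linarith
    gcongr
    linarith
  have hpos : (0:ℝ) < (n.choose d : ℝ) * r ^ 2 := by positivity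
  have hmain : (∑ i ∈ Finset.range (d - 1), (n.choose i : ℝ))
      < (n.choose d : ℝ) * r ^ 2 * (1 / (1 - r)) :=
    lt_of_le_of_lt hsum (by exact mul_lt_mul_of_pos_left hgeom hpos)
  have heq : (n.choose d : ℝ) * r ^ 2 * (1 / (1 - r))
      = (x ^ 2 / ((1 - 2 * x) * (1 - x))) * (n.choose d : ℝ) := by
    rw [hx, hr]
    have hNne : (n:ℝ) ≠ 0 := ne_of_gt hNpos
    have hNDne : (n:ℝ) - (d:ℝ) ≠ 0 := ne_of_gt hND
    have hN2Dne : (n:ℝ) - 2*(d:ℝ) ≠ 0 := ne_of_gt hN2D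
    have e1 : (1:ℝ) - (d:ℝ)/((n:ℝ)-(d:ℝ)) = ((n:ℝ)-2*(d:ℝ))/((n:ℝ)-(d:ℝ)) := by
      field_simp; ring
    have e2 : (1:ℝ) - 2*((d:ℝ)/(n:ℝ)) = ((n:ℝ)-2*(d:ℝ))/(n:ℝ) := by
      field_simp
    have e3 : (1:ℝ) - (d:ℝ)/(n:ℝ) = ((n:ℝ)-(d:ℝ))/(n:ℝ) := by
      field_simp
    rw [e1, e2, e3]
    field_simp
  linarith [heq ▸ hmain]
end

section
/- Let G : F₂ⁿ → F₂ have exactly M ≥ 1 preimages of 1. Starting from the uniform superposition over F₂ⁿ, after t iterations of the Grover operator the amplitude on the good subspace is sin((2t+1)θ) where sin²θ = M/2ⁿ; consequently, taking t = ⌊(π/4)·√(2ⁿ/M)⌋ iterations, the probability of measuring an element of G⁻¹(1) is at least 1 - M/2ⁿ. -/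
open Real

/-- Grover's algorithm, as a fact about the two-dimensional rotation it
induces on the span of the good and bad states.  With `N = 2ⁿ`, `θ = arcsin √(M/N)`,
the Grover operator acts as rotation by `2θ`; starting from the uniform superposition
`(sin θ, cos θ)` (good amplitude, bad amplitude), after `t` iterations the good
amplitude is `sin((2t+1)θ)`, and for `t = ⌊π/(4θ)⌋` the success probability
`sin²((2t+1)θ)` is at least `1 - M/N`. -/
theorem grover_success_probability (n M : ℕ) (hM : 1 ≤ M) (hMN : M ≤ 2 ^ n)
    (θ : ℝ) (hθ : θ = Real.arcsin (Real.sqrt ((M : ℝ) / 2 ^ n)))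
    (R : ℝ × ℝ → ℝ × ℝ)
    (hR : ∀ p : ℝ × ℝ, R p = (p.1 * Real.cos (2 * θ) + p.2 * Real.sin (2 * θ),
                              -p.1 * Real.sin (2 * θ) + p.2 * Real.cos (2 * θ))) :
    (∀ t : ℕ, R^[t] (Real.sin θ, Real.cos θ) =
        (Real.sin ((2 * t + 1) * θ), Real.cos ((2 * t + 1) * θ))) ∧
    (Real.sin ((2 * (⌊π / (4 * θ)⌋₊ : ℝ) + 1) * θ)) ^ 2 ≥ 1 - (M : ℝ) / 2 ^ n := by
  have hNpos : (0 : ℝ) < 2 ^ n := by positivity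
  have hx0 : (0 : ℝ) < (M : ℝ) / 2 ^ n := by
    apply div_pos _ hNpos
    exact_mod_cast Nat.lt_of_lt_of_le Nat.zero_lt_one hM
  have hx1 : (M : ℝ) / 2 ^ n ≤ 1 := by
    rw [div_le_one hNpos]; exact_mod_cast hMN
  have hs0 : (0 : ℝ) < Real.sqrt ((M : ℝ) / 2 ^ n) := Real.sqrt_pos.mpr hx0
  have hs1 : Real.sqrt ((M : ℝ) / 2 ^ n) ≤ 1 := by
    rw [show (1:ℝ) = Real.sqrt 1 from (Real.sqrt_one).symm]
    exact Real.sqrt_le_sqrt hx1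
  have hθpos : 0 < θ := by
    rw [hθ]; exact Real.arcsin_pos.mpr hs0
  have hθle : θ ≤ π / 2 := by rw [hθ]; exact Real.arcsin_le_pi_div_two _
  have hsinθ : Real.sin θ = Real.sqrt ((M : ℝ) / 2 ^ n) := by
    rw [hθ]; exact Real.sin_arcsin (by linarith) hs1
  have hsinsq : Real.sin θ ^ 2 = (M : ℝ) / 2 ^ n := by
    rw [hsinθ, Real.sq_sqrt hx0.le]
  have hiter : ∀ t : ℕ, R^[t] (Real.sin θ, Real.cos θ) =
      (Real.sin ((2 * t + 1) * θ), Real.cos ((2 * t + 1) * θ)) := by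
    intro t
    induction t with
    | zero => simp
    | succ k ih =>
      rw [Function.iterate_succ_apply', ih, hR]
      have h1 : (2 * ((k : ℝ) + 1) + 1) * θ = (2 * k + 1) * θ + 2 * θ := by ring
      push_cast
      rw [h1, Real.sin_add, Real.cos_add]
      simp only [Prod.mk.injEq]
      exact ⟨trivial, by ring⟩
  refine ⟨hiter, ?_⟩
  set t : ℕ := ⌊π / (4 * θ)⌋₊ with ht
  set α : ℝ := (2 * (t : ℝ) + 1) * θ with hα
  have h4θ : (0 : ℝ) < 4 * θ := by linarith
  have hle : (t : ℝ) ≤ π / (4 * θ) := Nat.floor_le (by positivity)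
  have hlt : π / (4 * θ) < (t : ℝ) + 1 := Nat.lt_floor_add_one _
  have hαub : α ≤ π / 2 + θ := by
    have := (le_div_iff₀ h4θ).mp hle
    nlinarith
  have hαlb : π / 2 - θ < α := by
    have := (div_lt_iff₀ h4θ).mp hlt
    nlinarith
  have hβ : Real.cos α = Real.sin (π / 2 - α) := (Real.sin_pi_div_two_sub α).symm
  have hmono := Real.strictMonoOn_sin
  have hθmem : θ ∈ Set.Icc (-(π/2)) (π/2) := ⟨by linarith, hθle⟩
  have hβmem : π / 2 - α ∈ Set.Icc (-(π/2)) (π/2) := ⟨by linarith, by linarith⟩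
  have hnθmem : -θ ∈ Set.Icc (-(π/2)) (π/2) := ⟨by linarith, by linarith⟩
  have h1 : Real.sin (π / 2 - α) ≤ Real.sin θ :=
    (hmono.le_iff_le hβmem hθmem).mpr (by linarith)
  have h2 : -Real.sin θ ≤ Real.sin (π / 2 - α) := by
    rw [← Real.sin_neg]
    exact (hmono.le_iff_le hnθmem hβmem).mpr (by linarith)
  have hcossq : Real.cos α ^ 2 ≤ Real.sin θ ^ 2 := by
    rw [hβ]; exact sq_le_sq' h2 h1
  have hpyth := Real.sin_sq_add_cos_sq α
  nlinarith [hpyth, hcossq, hsinsq]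
end
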